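/- There exists a constant C > 0 such that for every Borel measure μ on ℝ², every x, y ∈ ℝ² with |y−x| ≤ 1, every δ ∈ (0,1/2) and every t ∈ (0,1]: ∫_{{ z : |z−y| ≥ t^{1/2} }} exp( −|z−y|²/t ) dμ(z) ≤ μ( B(y, t^{1/2−δ}) ) + exp( −t^{−2δ} ) · μ( B(x,4) ) + C·t²·∫_{ℝ²} exp( −|z−x|²/2 ) dμ(z). -/

import Mathlib

open MeasureTheory Set Real ENNReal

lemma gauss_aux_pointwise (t δ : ℝ) (ht : 0 < t) (ht1 : t ≤ 1)
    (hδ0 : 0 < δ) (hδ : δ < 1 / 2)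
    (x y z : EuclideanSpace ℝ (Fin 2)) (hxy : dist y x ≤ 1)
    (hz : Real.sqrt t ≤ dist z y) :
    ENNReal.ofReal (Real.exp (-(dist z y) ^ 2 / t)) ≤
      (Metric.closedBall y (t ^ ((1 : ℝ) / 2 - δ))).indicator
        (fun _ => (1 : ℝ≥0∞)) z
      + (Metric.closedBall x 4).indicator
        (fun _ => ENNReal.ofReal (Real.exp (-t ^ (-2 * δ)))) z
      + ENNReal.ofReal (16 * t ^ 2 * Real.exp (-(dist z x) ^ 2 / 2)) := by
  have hd0 : (0 : ℝ) ≤ dist z y := dist_nonneg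
  rcases le_or_gt (dist z y) (t ^ ((1 : ℝ) / 2 - δ)) with h1 | h1
  · have hzmem : z ∈ Metric.closedBall y (t ^ ((1 : ℝ) / 2 - δ)) :=
      Metric.mem_closedBall.2 h1
    have : ENNReal.ofReal (Real.exp (-(dist z y) ^ 2 / t)) ≤ 1 := by
      rw [← ENNReal.ofReal_one]
      apply ENNReal.ofReal_le_ofReal
      apply Real.exp_le_one_iff.2
      apply div_nonpos_of_nonpos_of_nonneg
      · nlinarith
      · exact ht.le
    calc ENNReal.ofReal (Real.exp (-(dist z y) ^ 2 / t)) ≤ 1 := this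
      _ = (Metric.closedBall y (t ^ ((1 : ℝ) / 2 - δ))).indicator
          (fun _ => (1 : ℝ≥0∞)) z := by rw [Set.indicator_of_mem hzmem]
      _ ≤ _ := by exact le_add_of_le_of_nonneg (le_add_of_le_of_nonneg le_rfl zero_le) zero_le
  · have hta : (0 : ℝ) < t ^ ((1 : ℝ) / 2 - δ) := Real.rpow_pos_of_pos ht _
    rcases le_or_gt (dist z x) 4 with h2 | h2
    · -- middle regime
      have hxmem : z ∈ Metric.closedBall x 4 := Metric.mem_closedBall.2 h2
      have key : Real.exp (-(dist z y) ^ 2 / t) ≤ Real.exp (-t ^ (-2 * δ)) := by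
        apply Real.exp_le_exp.2
        rw [neg_div, neg_le_neg_iff]
        have hsq : t ^ ((1 : ℝ) / 2 - δ) * t ^ ((1 : ℝ) / 2 - δ) ≤
            (dist z y) ^ 2 := by nlinarith
        have h12 : t ^ ((1 : ℝ) / 2 - δ) * t ^ ((1 : ℝ) / 2 - δ)
            = t ^ (1 - 2 * δ) := by
          rw [← Real.rpow_add ht]; ring_nf
        have h3 : t ^ (-2 * δ) = t ^ (1 - 2 * δ) / t := by
          rw [eq_div_iff ht.ne', ← Real.rpow_add_one ht.ne']; ring_nf
        rw [h3, ← h12]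
        gcongr
      calc ENNReal.ofReal (Real.exp (-(dist z y) ^ 2 / t))
          ≤ ENNReal.ofReal (Real.exp (-t ^ (-2 * δ))) :=
            ENNReal.ofReal_le_ofReal key
        _ = (Metric.closedBall x 4).indicator
            (fun _ => ENNReal.ofReal (Real.exp (-t ^ (-2 * δ)))) z := by
            rw [Set.indicator_of_mem hxmem]
        _ ≤ _ := le_add_of_le_of_nonneg (le_add_of_nonneg_of_le zero_le le_rfl) zero_le
    · -- far regime: dist z x > 4
      set r := dist z x with hr
      set s := dist z y with hs
      have hsr : r - 1 ≤ s := by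
        have h := dist_triangle z y x
        rw [← hr, ← hs] at h
        linarith
      have hr4 : (4 : ℝ) ≤ r := h2.le
      -- s^2/t ≥ r^2/2 + 1/(2t)
      have hstep : r ^ 2 / 2 + 1 / (2 * t) ≤ s ^ 2 / t := by
        have hs3 : (3 : ℝ) ≤ s := by linarith
        have hsq : (r - 1) ^ 2 ≤ s ^ 2 := by nlinarith
        have e1 : (0 : ℝ) ≤ t * (r ^ 2 - 4 * r + 1) :=
          mul_nonneg ht.le (by nlinarith)
        have e2 : t * (t * r ^ 2) ≤ 1 * (t * r ^ 2) :=
          mul_le_mul_of_nonneg_right ht1 (mul_nonneg ht.le (sq_nonneg r))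
        have e3 : t * (r - 1) ^ 2 ≤ t * s ^ 2 :=
          mul_le_mul_of_nonneg_left hsq ht.le
        rw [div_add_div _ _ two_ne_zero (by positivity : (2 : ℝ) * t ≠ 0),
          div_le_div_iff₀ (by positivity) ht]
        nlinarith [e1, e2, e3]
      have hexp16 : Real.exp (-(1 / (2 * t))) ≤ 16 * t ^ 2 := by
        have hu : (0:ℝ) < 1 / (2 * t) := by positivity
        have h4 : (1 / (2 * t)) ^ 2 / 4 ≤ Real.exp (1 / (2 * t)) := by
          have h := Real.add_one_le_exp (1 / (2 * t) / 2)
          have hhalf : (Real.exp (1 / (2 * t) / 2)) ^ 2 = Real.exp (1 / (2 * t)) := by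
            rw [sq, ← Real.exp_add]; congr 1; ring
          nlinarith [Real.exp_pos (1 / (2 * t) / 2)]
        rw [Real.exp_neg]
        rw [inv_le_comm₀ (Real.exp_pos _) (by positivity)]
        calc (16 * t ^ 2)⁻¹ = (1 / (2 * t)) ^ 2 / 4 := by
              field_simp; ring
          _ ≤ Real.exp (1 / (2 * t)) := h4
      have key : Real.exp (-s ^ 2 / t) ≤ 16 * t ^ 2 * Real.exp (-r ^ 2 / 2) := by
        have h5 : Real.exp (-s ^ 2 / t)
            ≤ Real.exp (-(1 / (2 * t))) * Real.exp (-r ^ 2 / 2) := by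
          rw [← Real.exp_add]
          apply Real.exp_le_exp.2
          have : -s ^ 2 / t = -(s ^ 2 / t) := by ring
          rw [this]
          have : -(1 / (2 * t)) + -r ^ 2 / 2 = -(r ^ 2 / 2 + 1 / (2 * t)) := by ring
          rw [this]
          exact neg_le_neg hstep
        calc Real.exp (-s ^ 2 / t)
            ≤ Real.exp (-(1 / (2 * t))) * Real.exp (-r ^ 2 / 2) := h5
          _ ≤ 16 * t ^ 2 * Real.exp (-r ^ 2 / 2) :=
            mul_le_mul_of_nonneg_right hexp16 (Real.exp_pos _).le
      calc ENNReal.ofReal (Real.exp (-s ^ 2 / t))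
          ≤ ENNReal.ofReal (16 * t ^ 2 * Real.exp (-r ^ 2 / 2)) :=
            ENNReal.ofReal_le_ofReal key
        _ ≤ _ := le_add_of_nonneg_of_le zero_le le_rfl

/-- Gaussian tail estimate for a Borel measure on `ℝ²`: there is a universal
`C > 0` such that for every Borel measure `μ`, all `x, y` with `|y-x| ≤ 1`,
every `δ ∈ (0,1/2)` and every `t ∈ (0,1]`,
`∫_{|z-y| ≥ √t} e^{-|z-y|²/t} dμ(z) ≤ μ(B(y,t^{1/2-δ})) + e^{-t^{-2δ}} μ(B(x,4))
+ C t² ∫ e^{-|z-x|²/2} dμ(z)`. -/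
theorem gaussian_tail_measure_bound :
    ∃ C > (0 : ℝ), ∀ (μ : Measure (EuclideanSpace ℝ (Fin 2)))
      (x y : EuclideanSpace ℝ (Fin 2)), dist y x ≤ 1 →
      ∀ δ ∈ Set.Ioo (0 : ℝ) (1 / 2), ∀ t ∈ Set.Ioc (0 : ℝ) 1,
      (∫⁻ z in {z | Real.sqrt t ≤ dist z y},
          ENNReal.ofReal (Real.exp (-(dist z y) ^ 2 / t)) ∂μ) ≤
        μ (Metric.closedBall y (t ^ ((1 : ℝ) / 2 - δ))) +
        ENNReal.ofReal (Real.exp (-t ^ (-2 * δ))) * μ (Metric.closedBall x 4) +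
        ENNReal.ofReal (C * t ^ 2) *
          ∫⁻ z, ENNReal.ofReal (Real.exp (-(dist z x) ^ 2 / 2)) ∂μ := by
  refine ⟨16, by norm_num, fun μ x y hxy δ hδ t ht => ?_⟩
  obtain ⟨hδ0, hδ12⟩ := hδ
  obtain ⟨ht0, ht1⟩ := ht
  set G1 : EuclideanSpace ℝ (Fin 2) → ℝ≥0∞ :=
    (Metric.closedBall y (t ^ ((1 : ℝ) / 2 - δ))).indicator (fun _ => (1 : ℝ≥0∞))
  set G2 : EuclideanSpace ℝ (Fin 2) → ℝ≥0∞ :=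
    (Metric.closedBall x 4).indicator
      (fun _ => ENNReal.ofReal (Real.exp (-t ^ (-2 * δ))))
  set G3 : EuclideanSpace ℝ (Fin 2) → ℝ≥0∞ :=
    fun z => ENNReal.ofReal (16 * t ^ 2 * Real.exp (-(dist z x) ^ 2 / 2))
  have hG1m : Measurable G1 :=
    (measurable_const.indicator Metric.isClosed_closedBall.measurableSet)
  have hG2m : Measurable G2 :=
    (measurable_const.indicator Metric.isClosed_closedBall.measurableSet)
  have hexpm : Measurable fun z : EuclideanSpace ℝ (Fin 2) =>
      Real.exp (-(dist z x) ^ 2 / 2) :=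
    (Real.continuous_exp.comp
      ((((continuous_id.dist continuous_const).pow 2).neg).div_const 2)).measurable
  have hG3m : Measurable G3 := by
    apply Measurable.ennreal_ofReal
    exact hexpm.const_mul _
  have hset : MeasurableSet {z : EuclideanSpace ℝ (Fin 2) | Real.sqrt t ≤ dist z y} := by
    exact measurableSet_le measurable_const
      ((continuous_id.dist continuous_const).measurable)
  have step1 : (∫⁻ z in {z | Real.sqrt t ≤ dist z y},
      ENNReal.ofReal (Real.exp (-(dist z y) ^ 2 / t)) ∂μ) ≤
      ∫⁻ z in {z | Real.sqrt t ≤ dist z y}, (G1 z + G2 z + G3 z) ∂μ := by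
    apply setLIntegral_mono ((hG1m.add hG2m).add hG3m)
    intro z hz
    exact gauss_aux_pointwise t δ ht0 ht1 hδ0 hδ12 x y z hxy hz
  have step2 : (∫⁻ z in {z | Real.sqrt t ≤ dist z y}, (G1 z + G2 z + G3 z) ∂μ)
      ≤ ∫⁻ z, (G1 z + G2 z + G3 z) ∂μ :=
    setLIntegral_le_lintegral _ _
  have step3 : (∫⁻ z, (G1 z + G2 z + G3 z) ∂μ)
      = (∫⁻ z, G1 z ∂μ) + (∫⁻ z, G2 z ∂μ) + (∫⁻ z, G3 z ∂μ) := by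
    rw [lintegral_add_right _ hG3m, lintegral_add_right _ hG2m]
  have hI1 : (∫⁻ z, G1 z ∂μ) = μ (Metric.closedBall y (t ^ ((1 : ℝ) / 2 - δ))) := by
    simp [G1, lintegral_indicator Metric.isClosed_closedBall.measurableSet]
  have hI2 : (∫⁻ z, G2 z ∂μ)
      = ENNReal.ofReal (Real.exp (-t ^ (-2 * δ))) * μ (Metric.closedBall x 4) := by
    simp [G2, lintegral_indicator Metric.isClosed_closedBall.measurableSet, mul_comm]
  have hI3 : (∫⁻ z, G3 z ∂μ) = ENNReal.ofReal ((16 : ℝ) * t ^ 2) *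
      ∫⁻ z, ENNReal.ofReal (Real.exp (-(dist z x) ^ 2 / 2)) ∂μ := by
    have : ∀ z : EuclideanSpace ℝ (Fin 2), G3 z = ENNReal.ofReal ((16 : ℝ) * t ^ 2) *
        ENNReal.ofReal (Real.exp (-(dist z x) ^ 2 / 2)) := by
      intro z
      rw [← ENNReal.ofReal_mul (by positivity)]
    simp_rw [this]
    rw [lintegral_const_mul _ hexpm.ennreal_ofReal]
  calc (∫⁻ z in {z | Real.sqrt t ≤ dist z y},
      ENNReal.ofReal (Real.exp (-(dist z y) ^ 2 / t)) ∂μ)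
      ≤ ∫⁻ z, (G1 z + G2 z + G3 z) ∂μ := step1.trans step2
    _ = _ := by rw [step3, hI1, hI2, hI3]
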